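/- arXiv:1909.03651 — 2 statements merged into one kernel-verified Lean document; each statement's English description precedes it below -/
import Mathlib

section
/- The function (21z⁶/(31π⁶)) · e^{-z}/(1+e^{-z})² integrates to 1 over ℝ, i.e., BLG(6) is a probability density. -/
open Real MeasureTheory Filter

noncomputable def C (α β : ℝ) : ℝ :=
  (210 + 35 * π ^ 2 * α ^ 2 + 98 * π ^ 4 * α * β + 155 * π ^ 6 * β ^ 2) / 105

noncomputable def g (z : ℝ) : ℝ := Real.exp (-z) / (1 + Real.exp (-z)) ^ 2

noncomputable def f (z α β : ℝ) : ℝ := ((1 - α * z - β * z ^ 3) ^ 2 + 1) / C α β * g z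

theorem bernoulli'_five' : bernoulli' 5 = 0 := by
  rw [bernoulli'_def]
  norm_num [Finset.sum_range_succ, bernoulli'_zero, bernoulli'_one, bernoulli'_two,
    bernoulli'_three, bernoulli'_four, Nat.choose]

theorem bernoulli'_six' : bernoulli' 6 = 1/42 := by
  rw [bernoulli'_def]
  norm_num [Finset.sum_range_succ, bernoulli'_zero, bernoulli'_one, bernoulli'_two,
    bernoulli'_three, bernoulli'_four, bernoulli'_five', Nat.choose]

theorem zeta6 : HasSum (fun n : ℕ => (1 : ℝ) / (n : ℝ) ^ 6) (π ^ 6 / 945) := by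
  have := hasSum_zeta_nat (k := 3) (by norm_num)
  have hb : (bernoulli 6 : ℝ) = 1/42 := by
    rw [bernoulli_eq_bernoulli'_of_ne_one (by norm_num), bernoulli'_six']; norm_num
  norm_num [hb, Nat.factorial] at this
  convert this using 1
  · simp [one_div]
  · ring

theorem eta6 : HasSum (fun n : ℕ => (-1 : ℝ) ^ (n + 1) / (n : ℝ) ^ 6)
    (31 * (π ^ 6 / 945) / 32) := by
  have heven : HasSum (fun n : ℕ => (if Even n then 2 / (n : ℝ) ^ 6 else 0)) (π ^ 6 / 945 / 32) := by
    have hinj : Function.Injective (fun n : ℕ => 2 * n) := fun a b h => by dsimp at h; omega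
    rw [← Function.Injective.hasSum_iff hinj (by
      intro n hn
      simp only [Set.mem_range, not_exists] at hn
      have hne : ¬ Even n := by rintro ⟨k, hk⟩; exact hn k (by omega)
      simp [hne])]
    have h2 := zeta6.mul_left (1/32)
    convert h2 using 1
    · rfl
    · funext n
      rcases eq_or_ne n 0 with h | h
      · simp [h]
      · have hn : (n : ℝ) ≠ 0 := Nat.cast_ne_zero.mpr h
        simp only [Function.comp]
        rw [if_pos ⟨n, by omega⟩]
        push_cast
        field_simp
        ring
    · ring
  have := zeta6.sub heven
  convert this using 1
  · rfl
  · funext n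
    rcases Nat.even_or_odd n with h | h
    · rw [if_pos h, div_sub_div_same, Odd.neg_one_pow h.add_one]
      norm_num
    · rw [if_neg (by simpa using h), Even.neg_one_pow h.add_one, sub_zero]
  · ring

theorem key_integral : ∫ t in Set.Ioi (0:ℝ), t ^ 6 * g t = 31 * π ^ 6 / 42 := by
  set a : ℕ → ℂ := fun n => (-1) ^ (n + 1) * n with ha
  set F : ℝ → ℂ := fun t => ((g t : ℝ) : ℂ) with hFdef
  have hp : ∀ n : ℕ, a n = 0 ∨ 0 < ((n : ℝ)) := by
    intro n
    rcases eq_or_ne n 0 with h | h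
    · left; simp [ha, h]
    · right; exact_mod_cast Nat.pos_of_ne_zero h
  have hs : 0 < (7 : ℂ).re := by norm_num
  have hFsum : ∀ t ∈ Set.Ioi (0:ℝ), HasSum (fun n : ℕ => a n * Real.exp (-(n:ℝ) * t)) (F t) := by
    intro t ht
    rw [Set.mem_Ioi] at ht
    have hx : ‖-Real.exp (-t)‖ < 1 := by
      rw [norm_neg, Real.norm_eq_abs, abs_of_pos (Real.exp_pos _)]
      exact Real.exp_lt_one_iff.mpr (by linarith)
    have h0 := hasSum_coe_mul_geometric_of_norm_lt_one hx
    have h1 := h0.neg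
    have h2 : HasSum (fun n : ℕ => (-1:ℝ) ^ (n+1) * n * Real.exp (-(n:ℝ) * t)) (g t) := by
      convert h1 using 1
      · rfl
      · funext n
        rw [neg_pow (Real.exp (-t)), ← Real.exp_nat_mul,
          show (n:ℝ) * -t = -((n:ℝ)*t) by ring]
        ring
      · rw [g, sub_neg_eq_add]
        field_simp
    have h3 := Complex.hasSum_ofReal.mpr h2
    convert h3 using 2 with n
    push_cast
    ring
  have h_sum : Summable fun n : ℕ => ‖a n‖ / (n : ℝ) ^ ((7:ℂ).re) := by
    have heq : (fun n : ℕ => ‖a n‖ / (n : ℝ) ^ ((7:ℂ).re))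
        = fun n : ℕ => (1 : ℝ) / (n : ℝ) ^ 6 := by
      funext n
      have hnorm : ‖a n‖ = n := by
        simp [ha, norm_mul, norm_pow]
      rw [hnorm, show ((7:ℂ).re) = ((7:ℕ):ℝ) by norm_num, Real.rpow_natCast]
      rcases eq_or_ne n 0 with h | h
      · simp [h]
      · have hn : (n : ℝ) ≠ 0 := Nat.cast_ne_zero.mpr h
        field_simp
    rw [heq]
    exact zeta6.summable
  have main := hasSum_mellin hp hs hFsum h_sum
  have other : HasSum (fun n : ℕ => Complex.Gamma 7 * a n / (n : ℝ) ^ (7:ℂ))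
      ((720 * (31 * (π ^ 6 / 945) / 32) : ℝ) : ℂ) := by
    have := Complex.hasSum_ofReal.mpr (eta6.mul_left 720)
    convert this using 2 with n
    have hG : Complex.Gamma 7 = 720 := by
      rw [show (7:ℂ) = ((6:ℕ):ℂ) + 1 by norm_num, Complex.Gamma_nat_eq_factorial]
      norm_num [Nat.factorial]
    rw [hG, show ((n:ℝ):ℂ) = ((n:ℕ):ℂ) by norm_num,
      show (7:ℂ) = ((7:ℕ):ℂ) by norm_num, Complex.cpow_natCast]
    rcases eq_or_ne n 0 with h | h
    · simp [ha, h]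
    · have hn : ((n : ℕ) : ℂ) ≠ 0 := Nat.cast_ne_zero.mpr h
      push_cast
      rw [ha]
      field_simp
  have hmel : mellin F 7 = ((720 * (31 * (π ^ 6 / 945) / 32) : ℝ) : ℂ) := main.unique other
  have hint : mellin F 7 = ((∫ t in Set.Ioi (0:ℝ), t ^ 6 * g t : ℝ) : ℂ) := by
    rw [mellin]
    rw [show ∫ t in Set.Ioi (0:ℝ), (t:ℂ) ^ ((7:ℂ) - 1) • F t
        = ∫ t in Set.Ioi (0:ℝ), ((t ^ 6 * g t : ℝ) : ℂ) from
      setIntegral_congr_fun measurableSet_Ioi (fun t ht => by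
        rw [smul_eq_mul, show (7:ℂ) - 1 = ((6:ℕ):ℂ) by norm_num, Complex.cpow_natCast]
        push_cast
        ring)]
    exact integral_ofReal
  rw [hint] at hmel
  have := Complex.ofReal_injective hmel
  rw [this]
  ring

theorem g_abs (z : ℝ) : g |z| = g z := by
  rcases abs_choice z with h | h
  · rw [h]
  · rw [h, g, g, neg_neg]
    rw [Real.exp_neg]
    have h1 : 0 < Real.exp z := Real.exp_pos z
    field_simp
    ring

theorem stmt7 : ∫ z : ℝ, 21 * z ^ 6 / (31 * π ^ 6) * g z = 1 := by
  have hpi : (31 : ℝ) * π ^ 6 ≠ 0 := by positivity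
  have habs : ∀ z : ℝ, 21 * z ^ 6 / (31 * π ^ 6) * g z
      = (fun t : ℝ => 21 * t ^ 6 / (31 * π ^ 6) * g t) |z| := by
    intro z
    simp only
    rw [g_abs, Even.pow_abs (by decide)]
  calc ∫ z : ℝ, 21 * z ^ 6 / (31 * π ^ 6) * g z
      = ∫ z : ℝ, (fun t : ℝ => 21 * t ^ 6 / (31 * π ^ 6) * g t) |z| := by
        exact integral_congr_ae (Filter.Eventually.of_forall habs)
    _ = 2 * ∫ t in Set.Ioi (0:ℝ), 21 * t ^ 6 / (31 * π ^ 6) * g t :=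
        integral_comp_abs (f := fun t : ℝ => 21 * t ^ 6 / (31 * π ^ 6) * g t)
    _ = 2 * ∫ t in Set.Ioi (0:ℝ), 21 / (31 * π ^ 6) * (t ^ 6 * g t) := by
        congr 1
        exact setIntegral_congr_fun measurableSet_Ioi (fun t _ => by ring)
    _ = 2 * (21 / (31 * π ^ 6) * ∫ t in Set.Ioi (0:ℝ), t ^ 6 * g t) := by
        rw [integral_const_mul]
    _ = 1 := by
        rw [key_integral]
        field_simp
        ring
end

section
/- If Z ~ AbSLG(α,β), then E(Z) = -14(5π²α + 7π⁴β)/(210 + 35π²α² + 98π⁴αβ + 155π⁶β²). -/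
open Real MeasureTheory Filter

open Set Topology


lemma g_eq (z : ℝ) : g z = Real.exp z / (Real.exp z + 1) ^ 2 := by
  unfold g
  rw [Real.exp_neg]
  have h := (Real.exp_pos z).ne'
  field_simp

lemma g_even (z : ℝ) : g (-z) = g z := by
  rw [g_eq, g_eq, Real.exp_neg]
  have h := (Real.exp_pos z).ne'
  field_simp
  ring

lemma g_nonneg (z : ℝ) : 0 ≤ g z := by
  unfold g; positivity

lemma g_le (z : ℝ) : g z ≤ Real.exp (-z) := by
  unfold g
  rw [div_le_iff₀ (by positivity)]
  nlinarith [Real.exp_pos (-z), sq_nonneg (Real.exp (-z))]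

lemma g_cont : Continuous g := by
  unfold g
  exact (Real.continuous_exp.comp continuous_neg).div
    (((continuous_const.add (Real.continuous_exp.comp continuous_neg)).pow 2))
    (fun z => by positivity)

lemma inv_le_exp_neg (z : ℝ) : (Real.exp z + 1)⁻¹ ≤ Real.exp (-z) := by
  rw [Real.exp_neg]
  exact inv_anti₀ (Real.exp_pos z) (by linarith)

lemma hG (z : ℝ) : HasDerivAt (fun t => -((Real.exp t + 1)⁻¹)) (g z) z := by
  have h1 : HasDerivAt (fun t => Real.exp t + 1) (Real.exp z) z :=
    (Real.hasDerivAt_exp z).add_const 1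
  have h2 := (h1.inv (by positivity)).neg
  have e : g z = -(-Real.exp z / (Real.exp z + 1) ^ 2) := by rw [g_eq]; ring
  rw [e]; exact h2

lemma int_pow_exp {c : ℝ} (hc : 0 < c) (k : ℕ) :
    IntegrableOn (fun z : ℝ => z ^ k * Real.exp (-(c * z))) (Ioi 0) := by
  have h := integrableOn_rpow_mul_exp_neg_mul_rpow (p := 1) (s := k) (b := c)
    (by exact lt_of_lt_of_le (by norm_num) (Nat.cast_nonneg k)) one_pos hc
  refine (h.congr_fun (fun x hx => ?_) measurableSet_Ioi)
  beta_reduce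
  rw [Real.rpow_one, Real.rpow_natCast, neg_mul]

lemma int_pow_exp_val {c : ℝ} (hc : 0 < c) (k : ℕ) :
    ∫ z in Ioi (0:ℝ), z ^ k * Real.exp (-(c * z)) = (Nat.factorial k : ℝ) / c ^ (k + 1) := by
  have h := Real.integral_rpow_mul_exp_neg_mul_Ioi (a := (k : ℝ) + 1) (r := c)
    (by positivity) hc
  rw [show ((k : ℝ) + 1 - 1) = (k : ℝ) by ring] at h
  have h2 : ∫ z in Ioi (0:ℝ), z ^ k * Real.exp (-(c * z))
      = ∫ t in Ioi (0:ℝ), t ^ (k : ℝ) * Real.exp (-(c * t)) := by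
    refine setIntegral_congr_fun measurableSet_Ioi (fun x hx => ?_)
    rw [Real.rpow_natCast]
  rw [h2, h]
  have h3 : (k : ℝ) + 1 = ((k + 1 : ℕ) : ℝ) := by push_cast; ring
  rw [h3, Real.rpow_natCast]
  push_cast
  rw [Real.Gamma_nat_eq_factorial]
  push_cast
  rw [div_pow, one_pow, div_mul_eq_mul_div, one_mul]

lemma intOn_pow_g (k : ℕ) : IntegrableOn (fun z : ℝ => z ^ k * g z) (Ioi 0) := by
  refine Integrable.mono (int_pow_exp one_pos k) ?_ ?_
  · exact ((continuous_pow k).mul g_cont).aestronglyMeasurable.restrict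
  · rw [ae_restrict_iff' measurableSet_Ioi]
    refine Eventually.of_forall (fun z hz => ?_)
    have hz0 : (0:ℝ) ≤ z := le_of_lt hz
    rw [Real.norm_eq_abs, Real.norm_eq_abs, abs_mul, abs_mul, abs_pow, abs_of_nonneg hz0,
      abs_of_nonneg (g_nonneg z), abs_of_nonneg (Real.exp_pos _).le, one_mul]
    exact mul_le_mul_of_nonneg_left (g_le z) (by positivity)

lemma cont_pow_E (k : ℕ) : Continuous (fun z : ℝ => z ^ k * (Real.exp z + 1)⁻¹) :=
  (continuous_pow k).mul ((Real.continuous_exp.add continuous_const).inv₀ (fun z => (add_pos (Real.exp_pos z) one_pos).ne'))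

lemma intOn_pow_E (k : ℕ) :
    IntegrableOn (fun z : ℝ => z ^ k * (Real.exp z + 1)⁻¹) (Ioi 0) := by
  refine Integrable.mono (int_pow_exp one_pos k) ?_ ?_
  · exact (cont_pow_E k).aestronglyMeasurable.restrict
  · rw [ae_restrict_iff' measurableSet_Ioi]
    refine Eventually.of_forall (fun z hz => ?_)
    have hz0 : (0:ℝ) ≤ z := le_of_lt hz
    have h1 : (0:ℝ) ≤ (Real.exp z + 1)⁻¹ := by positivity
    rw [Real.norm_eq_abs, Real.norm_eq_abs, abs_mul, abs_mul, abs_pow, abs_of_nonneg hz0,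
      abs_of_nonneg h1, abs_of_nonneg (Real.exp_pos _).le, one_mul]
    exact mul_le_mul_of_nonneg_left (inv_le_exp_neg z) (by positivity)

lemma integrable_pow_g (k : ℕ) : Integrable (fun z : ℝ => z ^ k * g z) := by
  have h1 : IntegrableOn (fun z : ℝ => z ^ k * g z) (Ioi 0) := intOn_pow_g k
  have h2 : IntegrableOn (fun z : ℝ => z ^ k * g z) (Iic 0) := by
    rw [← Measure.map_neg_eq_self (volume : Measure ℝ)]
    have m : MeasurableEmbedding fun x : ℝ => -x := (Homeomorph.neg ℝ).measurableEmbedding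
    rw [m.integrableOn_map_iff]
    simp_rw [Function.comp_def, neg_preimage, neg_Iic, neg_zero]
    have heq : (fun z : ℝ => (-z) ^ k * g (-z)) = fun z : ℝ => (-1:ℝ) ^ k * (z ^ k * g z) := by
      funext z; rw [g_even, neg_pow]; ring
    rw [show (fun x : ℝ => (-x) ^ k * g (-x)) = fun z : ℝ => (-1:ℝ) ^ k * (z ^ k * g z)
      from heq]
    exact (Iff.mpr integrableOn_Ici_iff_integrableOn_Ioi h1).const_mul _
  have := h2.union h1
  rwa [Iic_union_Ioi, integrableOn_univ] at this

lemma integral_odd_pow_g (k : ℕ) (hk : Odd k) : ∫ z : ℝ, z ^ k * g z = 0 := by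
  have h := integral_neg_eq_self (fun z : ℝ => z ^ k * g z) (volume : Measure ℝ)
  have h2 : (∫ z : ℝ, (-z) ^ k * g (-z)) = ∫ z : ℝ, -(z ^ k * g z) := by
    congr 1; funext z; rw [g_even, hk.neg_pow]; ring
  rw [h2, integral_neg] at h
  linarith

lemma integral_even_pow_g (k : ℕ) (hk : Even k) :
    ∫ z : ℝ, z ^ k * g z = 2 * ∫ z in Ioi 0, z ^ k * g z := by
  have heq : (fun z : ℝ => z ^ k * g z) = fun z : ℝ => |z| ^ k * g |z| := by
    funext z
    rcases abs_cases z with ⟨h, _⟩ | ⟨h, _⟩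
    · rw [h]
    · rw [h, hk.neg_pow, g_even]
  conv_lhs => rw [heq]
  exact integral_comp_abs (f := fun t : ℝ => t ^ k * g t)

lemma hasSum_inv_exp {z : ℝ} (hz : 0 < z) :
    HasSum (fun j : ℕ => Real.exp (-z) ^ (2*j+1) - Real.exp (-z) ^ (2*j+2))
      ((Real.exp z + 1)⁻¹) := by
  set x := Real.exp (-z) with hx
  have hx0 : 0 < x := Real.exp_pos _
  have hx1 : x < 1 := by
    rw [hx]
    exact Real.exp_lt_one_iff.mpr (by linarith)
  have hgeo : HasSum (fun j : ℕ => (x^2) ^ j) (1 - x^2)⁻¹ :=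
    hasSum_geometric_of_lt_one (by positivity) (by nlinarith)
  have h := hgeo.mul_left (x - x^2)
  have heq : (fun j : ℕ => (x - x^2) * (x^2) ^ j)
      = fun j : ℕ => x ^ (2*j+1) - x ^ (2*j+2) := by
    funext j
    rw [← pow_mul]
    ring
  rw [heq] at h
  convert h using 1
  · rfl
  have h1 : (1:ℝ) - x^2 ≠ 0 := by nlinarith
  have h2 : Real.exp z = x⁻¹ := by rw [hx, Real.exp_neg, inv_inv]
  have hx0' : x ≠ 0 := ne_of_gt hx0
  rw [h2]
  have hne : x⁻¹ + 1 ≠ 0 := by positivity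
  rw [inv_eq_one_div (x⁻¹ + 1)]
  field_simp
  ring

lemma integral_A (k : ℕ) :
    ∫ z in Ioi (0:ℝ), z ^ k * (Real.exp z + 1)⁻¹
      = ∑' j : ℕ, ((Nat.factorial k : ℝ) / (2*(j:ℝ)+1) ^ (k+1)
          - (Nat.factorial k : ℝ) / (2*(j:ℝ)+2) ^ (k+1)) := by
  set F : ℕ → ℝ → ℝ :=
    fun j z => z ^ k * (Real.exp (-z) ^ (2*j+1) - Real.exp (-z) ^ (2*j+2)) with hF
  have hc1 : ∀ j : ℕ, (0:ℝ) < 2*(j:ℝ)+1 := fun j => by positivity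
  have hc2 : ∀ j : ℕ, (0:ℝ) < 2*(j:ℝ)+2 := fun j => by positivity
  -- rewrite each F j as difference of standard integrands
  have hFeq : ∀ j : ℕ, F j = fun z : ℝ =>
      z ^ k * Real.exp (-((2*(j:ℝ)+1) * z)) - z ^ k * Real.exp (-((2*(j:ℝ)+2) * z)) := by
    intro j
    funext z
    simp only [hF]
    have e1 : Real.exp (-z) ^ (2*j+1) = Real.exp (-((2*(j:ℝ)+1) * z)) := by
      rw [← Real.exp_nat_mul]
      push_cast
      ring_nf
    have e2 : Real.exp (-z) ^ (2*j+2) = Real.exp (-((2*(j:ℝ)+2) * z)) := by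
      rw [← Real.exp_nat_mul]
      push_cast
      ring_nf
    rw [e1, e2]
    ring
  have hFint : ∀ j : ℕ, IntegrableOn (F j) (Ioi 0) := by
    intro j
    rw [hFeq j]
    exact (int_pow_exp (hc1 j) k).sub (int_pow_exp (hc2 j) k)
  have hFval : ∀ j : ℕ, ∫ z in Ioi (0:ℝ), F j z
      = (Nat.factorial k : ℝ) / (2*(j:ℝ)+1) ^ (k+1)
        - (Nat.factorial k : ℝ) / (2*(j:ℝ)+2) ^ (k+1) := by
    intro j
    rw [hFeq j, integral_sub (int_pow_exp (hc1 j) k) (int_pow_exp (hc2 j) k),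
      int_pow_exp_val (hc1 j) k, int_pow_exp_val (hc2 j) k]
  -- pointwise sum on Ioi 0
  have hsum : ∀ z ∈ Ioi (0:ℝ), HasSum (fun j : ℕ => F j z) (z ^ k * (Real.exp z + 1)⁻¹) :=
    fun z hz => (hasSum_inv_exp hz).mul_left _
  have hnonneg : ∀ j : ℕ, ∀ z ∈ Ioi (0:ℝ), 0 ≤ F j z := by
    intro j z hz
    have hz0 : (0:ℝ) < z := hz
    have hx1 : Real.exp (-z) ≤ 1 := Real.exp_le_one_iff.mpr (by linarith)
    have hx0 : (0:ℝ) ≤ Real.exp (-z) := (Real.exp_pos _).le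
    have : Real.exp (-z) ^ (2*j+2) ≤ Real.exp (-z) ^ (2*j+1) :=
      pow_le_pow_of_le_one hx0 hx1 (by omega)
    have hzk : (0:ℝ) ≤ z ^ k := by positivity
    rw [hF]
    exact mul_nonneg hzk (by linarith)
  -- step 1: replace integrand by the tsum
  have step1 : ∫ z in Ioi (0:ℝ), z ^ k * (Real.exp z + 1)⁻¹
      = ∫ z in Ioi (0:ℝ), ∑' j : ℕ, F j z := by
    refine setIntegral_congr_fun measurableSet_Ioi (fun z hz => ?_)
    exact ((hsum z hz).tsum_eq).symm
  -- step 2: interchange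
  have hmeas : ∀ j : ℕ, AEStronglyMeasurable (F j) (volume.restrict (Ioi 0)) := by
    intro j
    rw [hF]
    exact ((continuous_pow k).mul
      (((Real.continuous_exp.comp continuous_neg).pow _).sub
        ((Real.continuous_exp.comp continuous_neg).pow _))).aestronglyMeasurable.restrict
  have hfin : ∑' j : ℕ, ∫⁻ z, ‖F j z‖₊ ∂(volume.restrict (Ioi 0)) ≠ ⊤ := by
    have hlin : ∀ j : ℕ, ∫⁻ z, ‖F j z‖₊ ∂(volume.restrict (Ioi 0))
        = ∫⁻ z, ENNReal.ofReal (F j z) ∂(volume.restrict (Ioi 0)) := by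
      intro j
      refine lintegral_congr_ae ?_
      filter_upwards [ae_restrict_mem measurableSet_Ioi] with z hz
      rw [← Real.enorm_eq_ofReal (hnonneg j z hz)]
      exact (enorm_eq_nnnorm _).symm
    simp_rw [hlin]
    rw [← lintegral_tsum (fun j => ((hmeas j).aemeasurable.ennreal_ofReal))]
    have hbd : ∫⁻ z, ∑' j : ℕ, ENNReal.ofReal (F j z) ∂(volume.restrict (Ioi 0))
        = ∫⁻ z, ENNReal.ofReal (z ^ k * (Real.exp z + 1)⁻¹) ∂(volume.restrict (Ioi 0)) := by
      refine lintegral_congr_ae ?_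
      filter_upwards [ae_restrict_mem measurableSet_Ioi] with z hz
      rw [← ENNReal.ofReal_tsum_of_nonneg (fun j => hnonneg j z hz) (hsum z hz).summable,
        (hsum z hz).tsum_eq]
    rw [hbd]
    have hInt := intOn_pow_E k
    have := hInt.2
    rw [hasFiniteIntegral_iff_norm] at this
    refine ne_of_lt (lt_of_le_of_lt ?_ this)
    refine lintegral_mono (fun z => ?_)
    exact ENNReal.ofReal_le_ofReal (le_abs_self _)
  rw [step1, integral_tsum hmeas hfin]
  exact tsum_congr hFval

set_option maxHeartbeats 1000000 in
lemma hs_aux {m : ℕ} (hm : m ≠ 0) {S : ℝ} (h : HasSum (fun n : ℕ => 1/(n:ℝ)^m) S) :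
    HasSum (fun j : ℕ => 1/(2*(j:ℝ)+1)^m - 1/(2*(j:ℝ)+2)^m) (S - S/2^m - S/2^m) := by
  have heven : HasSum (fun j : ℕ => 1/(((2*j : ℕ)):ℝ)^m) (S/2^m) := by
    have h2 := h.mul_left (1/2^m)
    have heq : (fun j : ℕ => (1/(2:ℝ)^m) * (1/(j:ℝ)^m)) = fun j : ℕ => 1/(((2*j:ℕ)):ℝ)^m := by
      funext j
      push_cast
      rw [mul_pow, div_mul_div_comm, one_mul]
    rw [heq] at h2
    convert h2 using 1
    · rfl
    rw [div_eq_mul_one_div S, mul_comm]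
  have hinj : Function.Injective (fun j : ℕ => 2*j+1) := by
    intro a b hab
    simp only at hab
    omega
  obtain ⟨t, ht⟩ : Summable (fun j : ℕ => 1/(((2*j+1 : ℕ)):ℝ)^m) :=
    h.summable.comp_injective hinj
  have htot : HasSum (fun n : ℕ => 1/(n:ℝ)^m) (S/2^m + t) := heven.even_add_odd ht
  have htval : t = S - S/2^m := by
    have := h.unique htot
    linarith
  have hshift : HasSum (fun j : ℕ => 1/(((2*(j+1) : ℕ)):ℝ)^m) (S/2^m) := by
    have h0 : (fun j : ℕ => 1/(((2*j : ℕ)):ℝ)^m) 0 = 0 := by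
      simp [zero_pow hm]
    refine (hasSum_nat_add_iff (f := fun j : ℕ => 1/(((2*j : ℕ)):ℝ)^m) 1).mpr ?_
    simpa [zero_pow hm] using heven
  rw [htval] at ht
  have hfinal := ht.sub hshift
  have heq2 : (fun j : ℕ => 1/(((2*j+1:ℕ)):ℝ)^m - 1/(((2*(j+1):ℕ)):ℝ)^m)
      = fun j : ℕ => 1/(2*(j:ℝ)+1)^m - 1/(2*(j:ℝ)+2)^m := by
    funext j
    push_cast
    ring_nf
  rw [heq2] at hfinal
  exact hfinal

lemma eta_two : HasSum (fun j : ℕ => 1/(2*(j:ℝ)+1)^2 - 1/(2*(j:ℝ)+2)^2) (π^2/12) := by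
  have := hs_aux two_ne_zero hasSum_zeta_two
  convert this using 1
  norm_num
  ring

lemma eta_four : HasSum (fun j : ℕ => 1/(2*(j:ℝ)+1)^4 - 1/(2*(j:ℝ)+2)^4) (7*π^4/720) := by
  have := hs_aux four_ne_zero hasSum_zeta_four
  convert this using 1
  norm_num
  ring

lemma tendsto_G : Tendsto (fun t : ℝ => -((Real.exp t + 1)⁻¹)) atTop (𝓝 0) := by
  have h : Tendsto (fun t : ℝ => Real.exp t + 1) atTop atTop :=
    tendsto_atTop_add_const_right _ 1 Real.tendsto_exp_atTop
  simpa using h.inv_tendsto_atTop.neg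

lemma M0 : ∫ z in Ioi (0:ℝ), g z = 1/2 := by
  have hint : IntegrableOn g (Ioi 0) := by
    have := intOn_pow_g 0
    simpa using this
  have h := integral_Ioi_of_hasDerivAt_of_tendsto' (a := 0) (m := 0)
    (fun x _ => hG x) hint tendsto_G
  rw [h]
  norm_num

lemma Mk (k : ℕ) (hk : k ≠ 0) :
    ∫ z in Ioi (0:ℝ), z ^ k * g z
      = (k:ℝ) * ∫ z in Ioi (0:ℝ), z ^ (k-1) * (Real.exp z + 1)⁻¹ := by
  set φ := fun z : ℝ => z ^ k * -((Real.exp z + 1)⁻¹) with hφ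
  have hderiv : ∀ x ∈ Ici (0:ℝ), HasDerivAt φ
      ((k:ℝ) * x ^ (k-1) * -((Real.exp x + 1)⁻¹) + x ^ k * g x) x := by
    intro x _
    exact (hasDerivAt_pow k x).mul (hG x)
  have h1 : IntegrableOn (fun x : ℝ => (k:ℝ) * x ^ (k-1) * -((Real.exp x + 1)⁻¹)) (Ioi 0) := by
    refine IntegrableOn.congr_fun ((intOn_pow_E (k-1)).const_mul (-(k:ℝ)))
      (fun x _ => by ring) measurableSet_Ioi
  have hint' := h1.add (intOn_pow_g k)
  have hten : Tendsto φ atTop (𝓝 0) := by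
    refine squeeze_zero_norm' ?_ (tendsto_pow_mul_exp_neg_atTop_nhds_zero k)
    filter_upwards [eventually_ge_atTop (0:ℝ)] with t ht
    have hnorm : ‖φ t‖ = t ^ k * (Real.exp t + 1)⁻¹ := by
      rw [hφ]
      rw [norm_mul, norm_neg, Real.norm_eq_abs, Real.norm_eq_abs, abs_pow, abs_of_nonneg ht,
        abs_of_nonneg (by positivity : (0:ℝ) ≤ (Real.exp t + 1)⁻¹)]
    rw [hnorm]
    exact mul_le_mul_of_nonneg_left (inv_le_exp_neg t) (by positivity)
  have hFTC := integral_Ioi_of_hasDerivAt_of_tendsto' hderiv hint' hten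
  have hzero : φ 0 = 0 := by
    rw [hφ]
    simp [zero_pow hk]
  rw [hzero, sub_zero, integral_add h1 (intOn_pow_g k)] at hFTC
  have hml : ∫ x in Ioi (0:ℝ), (k:ℝ) * x ^ (k-1) * -((Real.exp x + 1)⁻¹)
      = -(k:ℝ) * ∫ x in Ioi (0:ℝ), x ^ (k-1) * (Real.exp x + 1)⁻¹ := by
    rw [← integral_const_mul]
    refine setIntegral_congr_fun measurableSet_Ioi (fun x _ => by ring)
  rw [hml] at hFTC
  linarith

lemma moment_two : ∫ z : ℝ, z ^ 2 * g z = π^2/3 := by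
  have he : ∑' j:ℕ, ((Nat.factorial 1 : ℝ)/(2*(j:ℝ)+1)^(1+1)
      - (Nat.factorial 1 : ℝ)/(2*(j:ℝ)+2)^(1+1)) = π^2/12 := by
    rw [← eta_two.tsum_eq]
    refine tsum_congr (fun j => ?_)
    norm_num [Nat.factorial]
  rw [integral_even_pow_g 2 ⟨1, rfl⟩, Mk 2 (by norm_num),
    show (2:ℕ) - 1 = 1 from rfl, integral_A 1, he]
  push_cast
  ring

lemma moment_four : ∫ z : ℝ, z ^ 4 * g z = 7*π^4/15 := by
  have he : ∑' j:ℕ, ((Nat.factorial 3 : ℝ)/(2*(j:ℝ)+1)^(3+1)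
      - (Nat.factorial 3 : ℝ)/(2*(j:ℝ)+2)^(3+1)) = 6*(7*π^4/720) := by
    rw [← eta_four.tsum_eq, ← tsum_mul_left]
    refine tsum_congr (fun j => ?_)
    norm_num [Nat.factorial]
    ring
  rw [integral_even_pow_g 4 ⟨2, rfl⟩, Mk 4 (by norm_num),
    show (4:ℕ) - 1 = 3 from rfl, integral_A 3, he]
  push_cast
  ring

noncomputable def coef (α β : ℝ) : ℕ → ℝ
  | 1 => 2
  | 2 => -(2*α)
  | 3 => α^2
  | 4 => -(2*β)
  | 5 => 2*α*β
  | 7 => β^2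
  | _ => 0

lemma D_pos (α β : ℝ) :
    0 < 210 + 35 * π ^ 2 * α ^ 2 + 98 * π ^ 4 * α * β + 155 * π ^ 6 * β ^ 2 := by
  nlinarith [sq_nonneg (5 * π * α + 7 * π^3 * β), sq_nonneg (π^3 * β), sq_nonneg (π * α),
    sq_nonneg π, Real.pi_pos]

theorem stmt13 (α β : ℝ) :
    ∫ z : ℝ, z * f z α β =
      -14 * (5 * π ^ 2 * α + 7 * π ^ 4 * β) /
        (210 + 35 * π ^ 2 * α ^ 2 + 98 * π ^ 4 * α * β + 155 * π ^ 6 * β ^ 2) := by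
  have hD := D_pos α β
  have hC : C α β ≠ 0 := by
    unfold C
    positivity
  have key : (fun z : ℝ => z * f z α β)
      = fun z : ℝ => (C α β)⁻¹ * ∑ k ∈ Finset.range 8, coef α β k * (z ^ k * g z) := by
    funext z
    unfold f
    simp only [Finset.sum_range_succ, Finset.sum_range_zero, coef]
    field_simp
    ring
  rw [key]
  rw [integral_const_mul, integral_finset_sum _
    (fun k _ => (integrable_pow_g k).const_mul (coef α β k))]
  simp only [Finset.sum_range_succ, Finset.sum_range_zero, coef, integral_const_mul]
  rw [moment_two, moment_four, integral_odd_pow_g 1 ⟨0, rfl⟩, integral_odd_pow_g 3 ⟨1, rfl⟩,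
    integral_odd_pow_g 5 ⟨2, rfl⟩, integral_odd_pow_g 7 ⟨3, rfl⟩]
  unfold C
  field_simp
  ring
end
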